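/- arXiv:1503.02298 — 2 statements merged into one kernel-verified Lean document; each statement's English description precedes it below -/
import Mathlib

section
/- A cubic graph is cyclically 5-connected if and only if it is quad-connected and contains no circuit of length four. -/
open SimpleGraph

/-- A graph has a circuit if it contains a cycle. -/
def HasCircuit {V : Type} (G : SimpleGraph V) : Prop :=
  ∃ (v : V) (w : G.Walk v v), w.IsCycle

/-- `s` is the vertex set of a quadrangle (circuit of length four) of `G`. -/
def IsQuadSet {V : Type} (G : SimpleGraph V) (s : Set V) : Prop :=
  ∃ a b c d : V, s = {a, b, c, d} ∧ a ≠ b ∧ a ≠ c ∧ a ≠ d ∧ b ≠ c ∧ b ≠ d ∧ c ≠ d ∧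
    G.Adj a b ∧ G.Adj b c ∧ G.Adj c d ∧ G.Adj d a

def HasQuadrangle {V : Type} (G : SimpleGraph V) : Prop := ∃ s, IsQuadSet G s

def AtMostOneQuadrangle {V : Type} (G : SimpleGraph V) : Prop :=
  ∀ s t, IsQuadSet G s → IsQuadSet G t → s = t

/-- The edge cut `δA`: edges with one end in `A` and the other outside. -/
def cutEdges {V : Type} (G : SimpleGraph V) (A : Set V) : Set (Sym2 V) :=
  {e | ∃ a b, a ∈ A ∧ b ∉ A ∧ G.Adj a b ∧ e = s(a, b)}

/-- `G` is `k`-connected: more than `k` vertices and removing fewer than `k`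
vertices leaves a connected graph. -/
def IsKConnected {V : Type} [Fintype V] (G : SimpleGraph V) (k : ℕ) : Prop :=
  k < Fintype.card V ∧ ∀ S : Set V, S.ncard < k → (G.induce Sᶜ).Connected

/-- Every vertex has degree three. -/
def IsCubic {V : Type} (G : SimpleGraph V) : Prop :=
  ∀ v : V, (G.neighborSet v).ncard = 3

/-- Cyclically `k`-connected cubic graph: 3-connected, at least `2k` vertices, and
every edge-cut of cardinality less than `k` has a circuit-free side. -/
def CyclicallyKConnected {V : Type} [Fintype V] (G : SimpleGraph V) (k : ℕ) : Prop :=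
  IsKConnected G 3 ∧ 2 * k ≤ Fintype.card V ∧
    ∀ A : Set V, A.Nonempty → Aᶜ.Nonempty → (cutEdges G A).ncard < k →
      ¬ HasCircuit (G.induce A) ∨ ¬ HasCircuit (G.induce Aᶜ)

/-- The induced subgraph on `A` is (exactly) a quadrangle. -/
def IsQuadrangleGraphOn {V : Type} (G : SimpleGraph V) (A : Set V) : Prop :=
  ∃ a b c d : V, A = {a, b, c, d} ∧ a ≠ b ∧ a ≠ c ∧ a ≠ d ∧ b ≠ c ∧ b ≠ d ∧ c ≠ d ∧
    G.Adj a b ∧ G.Adj b c ∧ G.Adj c d ∧ G.Adj d a ∧ ¬ G.Adj a c ∧ ¬ G.Adj b d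

/-- Quad-connected cubic graph. -/
def QuadConnected {V : Type} [Fintype V] (G : SimpleGraph V) : Prop :=
  CyclicallyKConnected G 4 ∧ 10 ≤ Fintype.card V ∧
    ((∃ s t, IsQuadSet G s ∧ IsQuadSet G t ∧ s ≠ t) → 12 ≤ Fintype.card V) ∧
    ∀ A : Set V, A.Nonempty → Aᶜ.Nonempty → (cutEdges G A).ncard ≤ 4 →
      (¬ HasCircuit (G.induce A) ∨ IsQuadrangleGraphOn G A) ∨
      (¬ HasCircuit (G.induce Aᶜ) ∨ IsQuadrangleGraphOn G Aᶜ)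

/-- `G+(u,v,x,y)`: subdivide the edges `uv` and `xy` (new vertices `Sum.inr 0`
resp. `Sum.inr 1`) and join the two new vertices by an edge. -/
def onePlus {V : Type} (G : SimpleGraph V) (u v x y : V) : SimpleGraph (V ⊕ Fin 2) :=
  SimpleGraph.fromRel (fun a b =>
    match a, b with
    | Sum.inl a, Sum.inl b => G.Adj a b ∧ s(a, b) ≠ s(u, v) ∧ s(a, b) ≠ s(x, y)
    | Sum.inl a, Sum.inr i => (i = 0 ∧ (a = u ∨ a = v)) ∨ (i = 1 ∧ (a = x ∨ a = y))
    | Sum.inr _, Sum.inl _ => False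
    | Sum.inr i, Sum.inr j => i ≠ j)

/-- The data of a 1-extension `G+(u,v,x,y)`: `uv`, `xy` are edges and
`u,v,x,y` are pairwise distinct. -/
def OneExtData {V : Type} (G : SimpleGraph V) (u v x y : V) : Prop :=
  G.Adj u v ∧ G.Adj x y ∧ u ≠ x ∧ u ≠ y ∧ v ≠ x ∧ v ≠ y

/-- A long 1-extension: moreover neither `u` nor `v` is adjacent to `x` or `y`. -/
def LongOneExtData {V : Type} (G : SimpleGraph V) (u v x y : V) : Prop :=
  OneExtData G u v x y ∧ ¬ G.Adj u x ∧ ¬ G.Adj u y ∧ ¬ G.Adj v x ∧ ¬ G.Adj v y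

/-- A short 1-extension: a 1-extension that is not long. -/
def ShortOneExtData {V : Type} (G : SimpleGraph V) (u v x y : V) : Prop :=
  OneExtData G u v x y ∧ (G.Adj u x ∨ G.Adj u y ∨ G.Adj v x ∨ G.Adj v y)

/-- A homeomorphic embedding of `G` into `H`. -/
structure HomeoEmb {V W : Type} (G : SimpleGraph V) (H : SimpleGraph W) where
  vmap : V → W
  vinj : Function.Injective vmap
  emap : ∀ ⦃a b : V⦄, G.Adj a b → H.Walk (vmap a) (vmap b)
  emap_path : ∀ ⦃a b : V⦄ (h : G.Adj a b), (emap h).IsPath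
  emap_symm : ∀ ⦃a b : V⦄ (h : G.Adj a b), (emap h.symm).reverse = emap h
  internal : ∀ ⦃a b : V⦄ (h : G.Adj a b) (w : W), w ∈ (emap h).support →
      w ∈ Set.range vmap → w = vmap a ∨ w = vmap b
  edge_disjoint : ∀ ⦃a b c d : V⦄ (h₁ : G.Adj a b) (h₂ : G.Adj c d),
      s(a, b) ≠ s(c, d) → ∀ e, e ∈ (emap h₁).edges → e ∉ (emap h₂).edges
  meet_ends : ∀ ⦃a b c d : V⦄ (h₁ : G.Adj a b) (h₂ : G.Adj c d),
      s(a, b) ≠ s(c, d) → ∀ w, w ∈ (emap h₁).support → w ∈ (emap h₂).support →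
      (w = vmap a ∨ w = vmap b) ∧ (w = vmap c ∨ w = vmap d)

/-- Subdividing the edge `uv` of `G`: the new vertex is `Sum.inr ()`. -/
def subdivideEdge {V : Type} (G : SimpleGraph V) (u v : V) : SimpleGraph (V ⊕ Unit) :=
  SimpleGraph.fromRel (fun a b =>
    match a, b with
    | Sum.inl a, Sum.inl b => G.Adj a b ∧ s(a, b) ≠ s(u, v)
    | Sum.inl a, Sum.inr _ => a = u ∨ a = v
    | _, _ => False)

/-- `S` is obtained from `G` by repeatedly subdividing edges. -/
inductive IsSubdivision {V : Type} (G : SimpleGraph V) : {W : Type} → SimpleGraph W → Prop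
  | refl : IsSubdivision G G
  | step {W : Type} {S : SimpleGraph W} {u v : W} (h : S.Adj u v)
      (hS : IsSubdivision G S) : IsSubdivision G (subdivideEdge S u v)

/-- `H` topologically contains `G`: some graph obtained from `G` by repeatedly
subdividing edges is isomorphic to a subgraph of `H`. -/
def TopContains {W V : Type} (H : SimpleGraph W) (G : SimpleGraph V) : Prop :=
  ∃ (U : Type) (S : SimpleGraph U), IsSubdivision G S ∧
    ∃ f : U → W, Function.Injective f ∧ ∀ a b : U, S.Adj a b → H.Adj (f a) (f b)

/-- The biladder on `2p` vertices; `(false, i)` is `uᵢ` and `(true, i)` is `vᵢ`. -/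
def biladder (p : ℕ) : SimpleGraph (Bool × ZMod p) :=
  SimpleGraph.fromRel (fun a b =>
    (a.1 = false ∧ b.1 = false ∧ b.2 = a.2 + 1) ∨
    (a.1 = true ∧ b.1 = true ∧ b.2 = a.2 + 2) ∨
    (a.1 = false ∧ b.1 = true ∧ a.2 = b.2))


open SimpleGraph Walk in

lemma forest_card_edgeFinset_lt {W : Type} [Fintype W] [Nonempty W] {H : SimpleGraph W}
    [Fintype H.edgeSet] (hH : H.IsAcyclic) :
    H.edgeFinset.card < Fintype.card W := by
  classical
  set root : W → W := fun w => (H.connectedComponentMk w).out with hrootdef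
  have hcc : ∀ w, H.connectedComponentMk (root w) = H.connectedComponentMk w := fun w =>
    (H.connectedComponentMk w).out_eq
  have hroot : ∀ w, H.Reachable w (root w) := fun w =>
    (ConnectedComponent.exact (hcc w)).symm
  have hrooteq : ∀ {a b : W}, H.Adj a b → root a = root b := by
    intro a b hab
    simp only [hrootdef]
    rw [ConnectedComponent.sound hab.reachable]
  have hrootroot : ∀ w, root (root w) = root w := by
    intro w
    simp only [hrootdef]
    rw [hcc w]
  have existsu : ∀ w, ∃! p : H.Walk w (root w), p.IsPath := by
    intro w
    obtain ⟨p0⟩ := hroot w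
    exact ⟨p0.toPath, p0.toPath.2, fun q hq => Subtype.ext_iff.mp (hH.path_unique ⟨q, hq⟩ p0.toPath)⟩
  choose f hf hf' using existsu
  set S : Finset W := Finset.univ.filter (fun w => w ≠ root w) with hSdef
  have hmemS : ∀ w, w ∈ S ↔ w ≠ root w := by
    intro w; simp [hSdef]
  have hcard : H.edgeFinset.card = S.card := by
    refine Eq.symm <| Finset.card_bij
        (fun w hw => ((f w).firstDart <| ?notNil).edge)
        (fun a ha => ?memEdges) ?inj ?surj
    case notNil => exact not_nil_of_ne (by simpa [hmemS] using hw)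
    case memEdges => simp
    case inj =>
      intros a ha b hb h
      wlog h' : (f a).length ≤ (f b).length generalizing a b
      · exact Eq.symm (this _ hb _ ha h.symm (le_of_not_ge h'))
      rw [dart_edge_eq_iff] at h
      obtain (h | h) := h
      · exact congrArg (·.fst) h
      · have h1 : ((f a).firstDart <| not_nil_of_ne (by simpa [hmemS] using ha)).snd = b :=
          congrArg (·.snd) h
        have hab : H.Adj a b := by
          have h2 := ((f a).firstDart <| not_nil_of_ne (by simpa [hmemS] using ha)).adj
          rw [h1] at h2
          exact h2
        have h3 := congrArg length (hf' _ (((f a).tail).copy h1 (hrooteq hab)) ?_)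
        · erw [length_copy] at h3
          rw [← add_left_inj 1,
            length_tail_add_one (not_nil_of_ne (by simpa [hmemS] using ha))] at h3
          omega
        · simp only [ne_eq, eq_mp_eq_cast, id_eq, isPath_copy]
          exact (isPath_copy ..).mpr (hf _).tail
    case surj =>
      simp only [Set.mem_toFinset, Sym2.forall, SimpleGraph.mem_edgeSet, mem_edgeFinset]
      intros x y h
      wlog h' : (f x).length ≤ (f y).length generalizing x y
      · rw [Sym2.eq_swap]
        exact this y x h.symm (le_of_not_ge h')
      have hrxy : root x = root y := hrooteq h
      have hyne : y ≠ root y := by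
        intro hy0
        have hfy : (Walk.nil.copy rfl hy0 : H.Walk y (root y)) = f y := hf' _ _ (by simp)
        have hfx : ((Walk.cons h Walk.nil).copy rfl (hy0.trans hrxy.symm) : H.Walk x (root x)) = f x :=
          hf' _ _ (by simp [h.ne])
        have h1 := congrArg length hfy
        have h2 := congrArg length hfx
        simp only [length_copy, length_nil, length_cons] at h1 h2
        omega
      refine ⟨y, (hmemS y).mpr hyne, dart_edge_eq_mk'_iff.2 <| Or.inr ?_⟩
      · have hyns : y ∉ (f x).support := by
          intro hy
          have htake : (f x).takeUntil y hy = Walk.cons h Walk.nil := by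
            have := hH.path_unique ⟨(f x).takeUntil y hy, (hf x).takeUntil hy⟩
              ⟨Walk.cons h Walk.nil, by simp [h.ne]⟩
            simpa using congrArg Subtype.val this
          have hdrop : ((f x).dropUntil y hy).copy rfl hrxy = f y :=
            hf' _ _ (by simp [(hf x).dropUntil hy])
          have hlen := congrArg length hdrop
          have hspec := congrArg length ((f x).take_spec hy)
          rw [length_append, htake] at hspec
          simp only [length_copy, length_cons, length_nil] at hlen hspec
          omega
        have hfyeq : ((Walk.cons h.symm (f x)).copy rfl hrxy) = f y :=
          hf' _ _ (by simp [cons_isPath_iff, hf x, hyns])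
        show ((f y).firstDart (not_nil_of_ne hyne)).toProd = (x, y).swap
        simp only [← hfyeq, firstDart_toProd]
        simp [Walk.getVert_copy]
  rw [hcard]
  refine Finset.card_lt_card ?_
  rw [Finset.ssubset_iff_of_subset (Finset.subset_univ S)]
  obtain ⟨w⟩ := ‹Nonempty W›
  exact ⟨root w, Finset.mem_univ _, by simp [hmemS, hrootroot w]⟩

lemma quad_hasCircuit {V : Type} (G : SimpleGraph V) {a b c d : V}
    (hab' : a ≠ b) (hac : a ≠ c) (had : a ≠ d) (hbc' : b ≠ c) (hbd : b ≠ d) (hcd' : c ≠ d)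
    (hab : G.Adj a b) (hbc : G.Adj b c) (hcd : G.Adj c d) (hda : G.Adj d a) :
    HasCircuit (G.induce ({a, b, c, d} : Set V)) := by
  set A : Set V := {a, b, c, d} with hA
  have ha : a ∈ A := by simp [hA]
  have hb : b ∈ A := by simp [hA]
  have hc : c ∈ A := by simp [hA]
  have hd : d ∈ A := by simp [hA]
  refine ⟨⟨a, ha⟩, Walk.cons (by simpa using hab : (G.induce A).Adj ⟨a, ha⟩ ⟨b, hb⟩)
    (Walk.cons (by simpa using hbc : (G.induce A).Adj ⟨b, hb⟩ ⟨c, hc⟩)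
    (Walk.cons (by simpa using hcd : (G.induce A).Adj ⟨c, hc⟩ ⟨d, hd⟩)
    (Walk.cons (by simpa using hda : (G.induce A).Adj ⟨d, hd⟩ ⟨a, ha⟩) Walk.nil))), ?_⟩
  rw [Walk.isCycle_def]
  refine ⟨?_, by simp, ?_⟩
  · rw [Walk.isTrail_def]
    simp [Walk.edges_cons, Sym2.eq_iff, Subtype.ext_iff]
    tauto
  · simp [Walk.support_cons, Subtype.ext_iff]
    tauto

lemma neighbor_out_ncard_le_one {V : Type} [Fintype V] {G : SimpleGraph V} (hcub : IsCubic G)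
    {A : Set V} {p q r : V} (hq : G.Adj p q) (hr : G.Adj p r) (hqr : q ≠ r)
    (hqA : q ∈ A) (hrA : r ∈ A) : (G.neighborSet p ∩ Aᶜ).ncard ≤ 1 := by
  have hsub : G.neighborSet p ∩ Aᶜ ⊆ G.neighborSet p \ {q, r} := by
    rintro x ⟨hx1, hx2⟩
    refine ⟨hx1, ?_⟩
    rintro (rfl | rfl)
    · exact hx2 hqA
    · exact hx2 hrA
  have hqr' : ({q, r} : Set V) ⊆ G.neighborSet p := by
    rintro x (rfl | rfl)
    · exact hq
    · exact hr
  have h1 : (G.neighborSet p \ {q, r}).ncard = 1 := by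
    rw [Set.ncard_diff hqr' (Set.toFinite _), hcub p, Set.ncard_pair hqr]
  calc (G.neighborSet p ∩ Aᶜ).ncard ≤ (G.neighborSet p \ {q, r}).ncard :=
        Set.ncard_le_ncard hsub (Set.toFinite _)
    _ = 1 := h1

lemma quad_cutEdges_ncard_le {V : Type} [Fintype V] {G : SimpleGraph V} (hcub : IsCubic G)
    {a b c d : V}
    (hab' : a ≠ b) (hac : a ≠ c) (had : a ≠ d) (hbc' : b ≠ c) (hbd : b ≠ d) (hcd' : c ≠ d)
    (hab : G.Adj a b) (hbc : G.Adj b c) (hcd : G.Adj c d) (hda : G.Adj d a) :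
    (cutEdges G ({a, b, c, d} : Set V)).ncard ≤ 4 := by
  set A : Set V := {a, b, c, d} with hA
  have ha : a ∈ A := by simp [hA]
  have hb : b ∈ A := by simp [hA]
  have hc : c ∈ A := by simp [hA]
  have hd : d ∈ A := by simp [hA]
  have hOa : (G.neighborSet a ∩ Aᶜ).ncard ≤ 1 :=
    neighbor_out_ncard_le_one hcub hab hda.symm hbd hb hd
  have hOb : (G.neighborSet b ∩ Aᶜ).ncard ≤ 1 :=
    neighbor_out_ncard_le_one hcub hab.symm hbc hac ha hc
  have hOc : (G.neighborSet c ∩ Aᶜ).ncard ≤ 1 :=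
    neighbor_out_ncard_le_one hcub hbc.symm hcd hbd hb hd
  have hOd : (G.neighborSet d ∩ Aᶜ).ncard ≤ 1 :=
    neighbor_out_ncard_le_one hcub hda hcd.symm hac ha hc
  have hsub : cutEdges G A ⊆
      ((fun x => s(a, x)) '' (G.neighborSet a ∩ Aᶜ)) ∪
      (((fun x => s(b, x)) '' (G.neighborSet b ∩ Aᶜ)) ∪
      (((fun x => s(c, x)) '' (G.neighborSet c ∩ Aᶜ)) ∪
      ((fun x => s(d, x)) '' (G.neighborSet d ∩ Aᶜ)))) := by
    rintro e ⟨p, x, hpA, hxA, hadj, rfl⟩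
    have hp : p = a ∨ p = b ∨ p = c ∨ p = d := by simpa [hA] using hpA
    rcases hp with rfl | rfl | rfl | rfl
    · exact Or.inl ⟨x, ⟨hadj, hxA⟩, rfl⟩
    · exact Or.inr (Or.inl ⟨x, ⟨hadj, hxA⟩, rfl⟩)
    · exact Or.inr (Or.inr (Or.inl ⟨x, ⟨hadj, hxA⟩, rfl⟩))
    · exact Or.inr (Or.inr (Or.inr ⟨x, ⟨hadj, hxA⟩, rfl⟩))
  have h1 := Set.ncard_le_ncard hsub (Set.toFinite _)
  have h2 := Set.ncard_union_le ((fun x => s(a, x)) '' (G.neighborSet a ∩ Aᶜ))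
      (((fun x => s(b, x)) '' (G.neighborSet b ∩ Aᶜ)) ∪
      (((fun x => s(c, x)) '' (G.neighborSet c ∩ Aᶜ)) ∪
      ((fun x => s(d, x)) '' (G.neighborSet d ∩ Aᶜ))))
  have h3 := Set.ncard_union_le ((fun x => s(b, x)) '' (G.neighborSet b ∩ Aᶜ))
      (((fun x => s(c, x)) '' (G.neighborSet c ∩ Aᶜ)) ∪
      ((fun x => s(d, x)) '' (G.neighborSet d ∩ Aᶜ)))
  have h4 := Set.ncard_union_le ((fun x => s(c, x)) '' (G.neighborSet c ∩ Aᶜ))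
      ((fun x => s(d, x)) '' (G.neighborSet d ∩ Aᶜ))
  have i1 := Set.ncard_image_le (s := G.neighborSet a ∩ Aᶜ) (f := fun x => s(a, x)) (Set.toFinite _)
  have i2 := Set.ncard_image_le (s := G.neighborSet b ∩ Aᶜ) (f := fun x => s(b, x)) (Set.toFinite _)
  have i3 := Set.ncard_image_le (s := G.neighborSet c ∩ Aᶜ) (f := fun x => s(c, x)) (Set.toFinite _)
  have i4 := Set.ncard_image_le (s := G.neighborSet d ∩ Aᶜ) (f := fun x => s(d, x)) (Set.toFinite _)
  omega

lemma quad_compl_hasCircuit {V : Type} [Fintype V] {G : SimpleGraph V} (hcub : IsCubic G)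
    (hV : 10 ≤ Fintype.card V) {a b c d : V}
    (hab' : a ≠ b) (hac : a ≠ c) (had : a ≠ d) (hbc' : b ≠ c) (hbd : b ≠ d) (hcd' : c ≠ d)
    (hab : G.Adj a b) (hbc : G.Adj b c) (hcd : G.Adj c d) (hda : G.Adj d a) :
    HasCircuit (G.induce ({a, b, c, d} : Set V)ᶜ) := by
  classical
  by_contra hnc
  set A : Set V := {a, b, c, d} with hA
  have ha : a ∈ A := by simp [hA]
  have hb : b ∈ A := by simp [hA]
  have hc : c ∈ A := by simp [hA]
  have hd : d ∈ A := by simp [hA]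
  haveI : Fintype ↥(Aᶜ) := Fintype.ofFinite _
  set H : SimpleGraph ↥(Aᶜ) := G.induce Aᶜ with hH
  haveI : DecidableRel H.Adj := Classical.decRel _
  have hacyc : H.IsAcyclic := fun v cc hcc => hnc ⟨v, cc, hcc⟩
  have hAcard : A.ncard ≤ 4 := by
    have h1 := Set.ncard_insert_le a ({b, c, d} : Set V)
    have h2 := Set.ncard_insert_le b ({c, d} : Set V)
    have h3 := Set.ncard_insert_le c ({d} : Set V)
    have h4 : ({d} : Set V).ncard = 1 := Set.ncard_singleton d
    simp only [hA]
    omega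
  have hncompl : A.ncard + Aᶜ.ncard = Fintype.card V := by
    rw [Set.ncard_add_ncard_compl, Nat.card_eq_fintype_card]
  have hn : Fintype.card ↥(Aᶜ) = Aᶜ.ncard := by
    rw [Set.ncard_eq_toFinset_card', Set.toFinset_card]
  have hBn : 6 ≤ Fintype.card ↥(Aᶜ) := by omega
  haveI : Nonempty ↥(Aᶜ) := by
    rw [← Fintype.card_pos_iff]
    omega
  have hedge : H.edgeFinset.card < Fintype.card ↥(Aᶜ) := forest_card_edgeFinset_lt hacyc
  have hhs : ∑ w : ↥(Aᶜ), H.degree w = 2 * H.edgeFinset.card :=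
    H.sum_degrees_eq_twice_card_edges
  have hdeg : ∀ w : ↥(Aᶜ), H.degree w + (G.neighborSet ↑w ∩ A).ncard = 3 := by
    intro w
    have himg : Subtype.val '' (H.neighborSet w) = G.neighborSet ↑w ∩ Aᶜ := by
      ext x
      constructor
      · rintro ⟨y, hy, rfl⟩
        exact ⟨by simpa [hH] using hy, y.2⟩
      · rintro ⟨hx1, hx2⟩
        exact ⟨⟨x, hx2⟩, by simpa [hH] using hx1, rfl⟩
    have h1 : H.degree w = (G.neighborSet ↑w ∩ Aᶜ).ncard := by
      rw [← himg, Set.ncard_image_of_injective _ Subtype.val_injective,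
        ← Nat.card_coe_set_eq, Nat.card_eq_fintype_card, card_neighborSet_eq_degree]
    have h2 : G.neighborSet ↑w ∩ Aᶜ = G.neighborSet ↑w \ A := (Set.diff_eq _ _).symm
    have h3 := Set.ncard_inter_add_ncard_diff_eq_ncard (G.neighborSet ↑w) A (Set.toFinite _)
    rw [h1, h2]
    rw [hcub ↑w] at h3
    omega
  have hsum3 : (∑ w : ↥(Aᶜ), H.degree w) + (∑ w : ↥(Aᶜ), (G.neighborSet ↑w ∩ A).ncard)
      = 3 * Fintype.card ↥(Aᶜ) := by
    rw [← Finset.sum_add_distrib]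
    rw [Finset.sum_congr rfl (fun w _ => hdeg w)]
    simp [Finset.sum_const, mul_comm]
  have hcnt : ∀ x : V, (G.neighborSet x ∩ Aᶜ).ncard ≤ 1 →
      (Finset.univ.filter (fun w : ↥(Aᶜ) => G.Adj ↑w x)).card ≤ 1 := by
    intro x hx
    rw [Set.ncard_eq_toFinset_card'] at hx
    refine le_trans ?_ hx
    refine Finset.card_le_card_of_injOn (fun w => ↑w) ?_ ?_
    · intro w hw
      simp only [Finset.coe_filter, Finset.mem_coe, Finset.mem_filter, Finset.mem_univ, true_and, Set.mem_setOf_eq] at hw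
      simp only [Finset.mem_coe, Set.mem_toFinset, Set.mem_inter_iff, mem_neighborSet]
      exact ⟨hw.symm, w.2⟩
    · intro w1 _ w2 _ h
      exact Subtype.ext h
  have hfin : ∀ w : ↥(Aᶜ), (G.neighborSet ↑w ∩ A).ncard
      = (({a, b, c, d} : Finset V).filter (fun x => G.Adj ↑w x)).card := by
    intro w
    rw [← Set.ncard_coe_finset]
    congr 1
    ext x
    simp only [Finset.coe_filter, Finset.mem_insert, Finset.mem_singleton,
      Set.mem_setOf_eq, Set.mem_inter_iff, mem_neighborSet, hA, Set.mem_insert_iff,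
      Set.mem_singleton_iff]
    tauto
  have hcut : (∑ w : ↥(Aᶜ), (G.neighborSet ↑w ∩ A).ncard) ≤ 4 := by
    have e1 : (∑ w : ↥(Aᶜ), (G.neighborSet ↑w ∩ A).ncard)
        = ∑ x ∈ ({a, b, c, d} : Finset V),
            (Finset.univ.filter (fun w : ↥(Aᶜ) => G.Adj ↑w x)).card := by
      simp_rw [hfin, Finset.card_filter]
      exact Finset.sum_comm
    rw [e1]
    have hb1 : ∀ x ∈ ({a, b, c, d} : Finset V),
        (Finset.univ.filter (fun w : ↥(Aᶜ) => G.Adj ↑w x)).card ≤ 1 := by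
      intro x hx
      simp only [Finset.mem_insert, Finset.mem_singleton] at hx
      rcases hx with rfl | rfl | rfl | rfl
      · exact hcnt _ (neighbor_out_ncard_le_one hcub hab hda.symm hbd hb hd)
      · exact hcnt _ (neighbor_out_ncard_le_one hcub hab.symm hbc hac ha hc)
      · exact hcnt _ (neighbor_out_ncard_le_one hcub hbc.symm hcd hbd hb hd)
      · exact hcnt _ (neighbor_out_ncard_le_one hcub hda hcd.symm hac ha hc)
    calc ∑ x ∈ ({a, b, c, d} : Finset V),
            (Finset.univ.filter (fun w : ↥(Aᶜ) => G.Adj ↑w x)).card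
        ≤ ∑ _x ∈ ({a, b, c, d} : Finset V), 1 := Finset.sum_le_sum hb1
      _ = ({a, b, c, d} : Finset V).card := by simp
      _ ≤ 4 := by
          have h1 := Finset.card_insert_le a ({b, c, d} : Finset V)
          have h2 := Finset.card_insert_le b ({c, d} : Finset V)
          have h3 := Finset.card_insert_le c ({d} : Finset V)
          have h4 : ({d} : Finset V).card = 1 := Finset.card_singleton d
          omega
  omega

/-- A cubic graph is cyclically 5-connected iff it is quad-connected
and contains no circuit of length four. -/
theorem cyclically5Connected_iff_quadConnected_no_quadrangle
    {V : Type} [Fintype V] (G : SimpleGraph V) (hcub : IsCubic G) :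
    CyclicallyKConnected G 5 ↔ (QuadConnected G ∧ ¬ HasQuadrangle G) := by
  constructor
  · rintro ⟨h3conn, hcard10, hcut5⟩
    have hcard10' : 10 ≤ Fintype.card V := by omega
    have hnoquad : ¬ HasQuadrangle G := by
      rintro ⟨s, aa, bb, cc, dd, rfl, hab', hac, had, hbc', hbd, hcd', hab, hbc, hcd, hda⟩
      set A : Set V := {aa, bb, cc, dd} with hA
      have hAne : A.Nonempty := ⟨aa, by simp [hA]⟩
      have hAcard : A.ncard ≤ 4 := by
        have h1 := Set.ncard_insert_le aa ({bb, cc, dd} : Set V)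
        have h2 := Set.ncard_insert_le bb ({cc, dd} : Set V)
        have h3 := Set.ncard_insert_le cc ({dd} : Set V)
        have h4 : ({dd} : Set V).ncard = 1 := Set.ncard_singleton dd
        simp only [hA]
        omega
      have hAcne : Aᶜ.Nonempty := by
        rw [Set.nonempty_compl]
        intro h
        rw [h, Set.ncard_univ, Nat.card_eq_fintype_card] at hAcard
        omega
      have hcutle : (cutEdges G A).ncard ≤ 4 :=
        quad_cutEdges_ncard_le hcub hab' hac had hbc' hbd hcd' hab hbc hcd hda
      rcases hcut5 A hAne hAcne (by omega) with h | h
      · exact h (quad_hasCircuit G hab' hac had hbc' hbd hcd' hab hbc hcd hda)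
      · exact h (quad_compl_hasCircuit hcub hcard10' hab' hac had hbc' hbd hcd' hab hbc hcd hda)
    refine ⟨⟨⟨h3conn, by omega, fun A h1 h2 h4 => hcut5 A h1 h2 (by omega)⟩, hcard10', ?_, ?_⟩, hnoquad⟩
    · rintro ⟨s, t, hs, ht, hst⟩
      exact absurd ⟨s, hs⟩ hnoquad
    · intro A h1 h2 h4
      rcases hcut5 A h1 h2 (by omega) with h | h
      · exact Or.inl (Or.inl h)
      · exact Or.inr (Or.inl h)
  · rintro ⟨⟨⟨h3conn, hcard8, hcut4⟩, hcard10, hmulti, hqcut⟩, hnq⟩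
    refine ⟨h3conn, by omega, ?_⟩
    intro A h1 h2 hlt
    rcases hqcut A h1 h2 (by omega) with (h | h) | (h | h)
    · exact Or.inl h
    · obtain ⟨aa, bb, cc, dd, hAeq, hab', hac, had, hbc', hbd, hcd', hab, hbc, hcd, hda, _, _⟩ := h
      exact absurd ⟨A, aa, bb, cc, dd, hAeq, hab', hac, had, hbc', hbd, hcd', hab, hbc, hcd, hda⟩ hnq
    · exact Or.inr h
    · obtain ⟨aa, bb, cc, dd, hAeq, hab', hac, had, hbc', hbd, hcd', hab, hbc, hcd, hda, _, _⟩ := h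
      exact absurd ⟨Aᶜ, aa, bb, cc, dd, hAeq, hab', hac, had, hbc', hbd, hcd', hab, hbc, hcd, hda⟩ hnq
end

section
/- Let G be a quad-connected cubic graph, let u1,u2,u3,u4,u5 in order be the vertices of a path in G, let G' = G+(u1,u2,u4,u5), and assume that either G is cyclically 5-connected or G has a quadrangle C with u1,u2 ∈ V(C) and u4,u5 ∉ V(C). Then G' is a short extension of G if and only if u1 and u5 are adjacent. -/
open SimpleGraph

section NC
variable {α : Type}

lemma myNcard3 (a b c : α) (hab : a ≠ b) (hac : a ≠ c) (hbc : b ≠ c) :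
    ({a,b,c} : Set α).ncard = 3 := by
  rw [Set.ncard_insert_of_notMem (by simp [hab, hac]) ((Set.finite_singleton c).insert b),
    Set.ncard_pair hbc]

lemma myNcard4 (a b c d : α) (hab : a ≠ b) (hac : a ≠ c) (had : a ≠ d)
    (hbc : b ≠ c) (hbd : b ≠ d) (hcd : c ≠ d) :
    ({a,b,c,d} : Set α).ncard = 4 := by
  rw [Set.ncard_insert_of_notMem (by simp [hab, hac, had])
    (((Set.finite_singleton d).insert c).insert b), myNcard3 b c d hbc hbd hcd]

lemma myNcard5 (a b c d e : α) (hab : a ≠ b) (hac : a ≠ c) (had : a ≠ d) (hae : a ≠ e)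
    (hbc : b ≠ c) (hbd : b ≠ d) (hbe : b ≠ e) (hcd : c ≠ d) (hce : c ≠ e) (hde : d ≠ e) :
    ({a,b,c,d,e} : Set α).ncard = 5 := by
  rw [Set.ncard_insert_of_notMem (by simp [hab, hac, had, hae])
    ((((Set.finite_singleton e).insert d).insert c).insert b),
    myNcard4 b c d e hbc hbd hbe hcd hce hde]

lemma myNcard6 (a b c d e f : α) (hab : a ≠ b) (hac : a ≠ c) (had : a ≠ d) (hae : a ≠ e)
    (haf : a ≠ f) (hbc : b ≠ c) (hbd : b ≠ d) (hbe : b ≠ e) (hbf : b ≠ f)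
    (hcd : c ≠ d) (hce : c ≠ e) (hcf : c ≠ f) (hde : d ≠ e) (hdf : d ≠ f) (hef : e ≠ f) :
    ({a,b,c,d,e,f} : Set α).ncard = 6 := by
  rw [Set.ncard_insert_of_notMem (by simp [hab, hac, had, hae, haf])
    (((((Set.finite_singleton f).insert e).insert d).insert c).insert b),
    myNcard5 b c d e f hbc hbd hbe hbf hcd hce hcf hde hdf hef]

lemma myNcard7 (a b c d e f g : α) (hab : a ≠ b) (hac : a ≠ c) (had : a ≠ d) (hae : a ≠ e)
    (haf : a ≠ f) (hag : a ≠ g) (hbc : b ≠ c) (hbd : b ≠ d) (hbe : b ≠ e) (hbf : b ≠ f)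
    (hbg : b ≠ g) (hcd : c ≠ d) (hce : c ≠ e) (hcf : c ≠ f) (hcg : c ≠ g)
    (hde : d ≠ e) (hdf : d ≠ f) (hdg : d ≠ g) (hef : e ≠ f) (heg : e ≠ g) (hfg : f ≠ g) :
    ({a,b,c,d,e,f,g} : Set α).ncard = 7 := by
  rw [Set.ncard_insert_of_notMem (by simp [hab, hac, had, hae, haf, hag])
    ((((((Set.finite_singleton g).insert f).insert e).insert d).insert c).insert b),
    myNcard6 b c d e f g hbc hbd hbe hbf hbg hcd hce hcf hcg hde hdf hdg hef heg hfg]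

end NC

section Forest
variable {W : Type} {G : SimpleGraph W}

lemma cycle_from_endpoint {v u : W} (r : G.Walk v u) (hr : r.IsPath)
    (w₁ w₂ : W) (h1 : G.Adj v w₁) (h2 : G.Adj v w₂) (hne : w₁ ≠ w₂)
    (hs1 : w₁ ∈ r.support) (hs2 : w₂ ∈ r.support) :
    ∃ (x : W) (c : G.Walk x x), c.IsCycle := by
  cases r with
  | nil => simp only [Walk.support_nil, List.mem_singleton] at hs1; exact absurd hs1 h1.ne'
  | @cons _ x _ h r' =>
    classical
    have hvr' : v ∉ r'.support := ((Walk.cons_isPath_iff h r').mp hr).2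
    have key : ∀ w : W, G.Adj v w → w ≠ x → w ∈ (Walk.cons h r').support →
        ∃ (x : W) (c : G.Walk x x), c.IsCycle := by
      intro w hw hwx hws
      have hedge : s(v, w) ∉ (Walk.cons h r').edges := by
        simp only [Walk.edges_cons, List.mem_cons]
        rintro (heq | hmem)
        · rw [Sym2.eq_iff] at heq
          rcases heq with ⟨-, rfl⟩ | ⟨rfl, -⟩
          · exact hwx rfl
          · exact h.ne rfl
        · exact hvr' (r'.fst_mem_support_of_mem_edges hmem)
      refine ⟨w, Walk.cons hw.symm ((Walk.cons h r').takeUntil w hws), ?_⟩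
      rw [Walk.cons_isCycle_iff]
      exact ⟨hr.takeUntil hws, fun hmem =>
        hedge (by simpa [Sym2.eq_swap] using (Walk.edges_takeUntil_subset _ hws) hmem)⟩
    by_cases hx : w₁ = x
    · exact key w₂ h2 (fun h' => hne (hx.trans h'.symm)) hs2
    · exact key w₁ h1 hx hs1

lemma exists_cycle_of_two_le [Fintype W] [Nonempty W] (G : SimpleGraph W)
    (h2 : ∀ v : W, 2 ≤ (G.neighborSet v).ncard) : ∃ (v : W) (c : G.Walk v v), c.IsCycle := by
  classical
  have : Nonempty (Σ u : W, Σ v : W, G.Path u v) :=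
    ⟨⟨Classical.arbitrary W, Classical.arbitrary W, ⟨Walk.nil, Walk.IsPath.nil⟩⟩⟩
  obtain ⟨⟨u, v, p⟩, hmax⟩ :=
    Finite.exists_max (fun x : Σ u : W, Σ v : W, G.Path u v => x.2.2.1.length)
  have hsup : ∀ w, G.Adj v w → w ∈ (p : G.Walk u v).support := by
    intro w hw
    by_contra hns
    have hpath : ((p : G.Walk u v).concat hw).IsPath := by
      rw [← Walk.isPath_reverse_iff, Walk.reverse_concat]
      rw [Walk.cons_isPath_iff]
      exact ⟨p.2.reverse, by simpa [Walk.support_reverse] using hns⟩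
    have := hmax ⟨u, w, ⟨(p : G.Walk u v).concat hw, hpath⟩⟩
    simp [Walk.length_concat] at this
  obtain ⟨w₁, w₂, hw₁, hw₂, hne⟩ := (Set.one_lt_ncard_iff (Set.toFinite _)).mp (h2 v)
  have hw₁' := (G.mem_neighborSet v w₁).mp hw₁
  have hw₂' := (G.mem_neighborSet v w₂).mp hw₂
  exact cycle_from_endpoint (p : G.Walk u v).reverse p.2.reverse w₁ w₂ hw₁' hw₂' hne
    (by simpa [Walk.support_reverse] using hsup _ hw₁') (by simpa [Walk.support_reverse] using hsup _ hw₂')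

lemma image_induce_edgeSet (G : SimpleGraph W) (s : Set W) :
    Sym2.map (Subtype.val) '' (G.induce s).edgeSet = {e ∈ G.edgeSet | ∀ v ∈ e, v ∈ s} := by
  ext e
  constructor
  · rintro ⟨e', he', rfl⟩
    induction e' using Sym2.ind with
    | _ a b =>
      rw [mem_edgeSet] at he'
      have hab : G.Adj a.1 b.1 := he'
      refine ⟨by simpa using hab, ?_⟩
      intro x hx
      rcases Sym2.mem_iff.mp (by simpa using hx) with rfl | rfl
      · exact a.2
      · exact b.2
  · rintro ⟨he, hmem⟩
    induction e using Sym2.ind with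
    | _ a b =>
      have ha : a ∈ s := hmem a (Sym2.mem_mk_left a b)
      have hb : b ∈ s := hmem b (Sym2.mem_mk_right a b)
      exact ⟨s(⟨a, ha⟩, ⟨b, hb⟩), by simpa using he, by simp⟩

end Forest

lemma acyclic_aux : ∀ (n : ℕ) (W : Type) [Fintype W] (G : SimpleGraph W), Nonempty W →
    Fintype.card W = n → G.IsAcyclic → G.edgeSet.ncard + 1 ≤ n := by
  intro n
  induction n using Nat.strong_induction_on with
  | _ n IH =>
    intro W _ G hne hcard hac
    haveI := hne
    classical
    by_cases hdeg : ∀ v : W, 2 ≤ (G.neighborSet v).ncard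
    · obtain ⟨v, c, hc⟩ := exists_cycle_of_two_le G hdeg
      exact absurd hc (hac c)
    push_neg at hdeg
    obtain ⟨v, hv⟩ := hdeg
    by_cases h1 : Fintype.card W = 1
    · haveI : Subsingleton W := Fintype.card_le_one_iff_subsingleton.mp (le_of_eq h1)
      have hempty : G.edgeSet = ∅ := by
        rw [Set.eq_empty_iff_forall_notMem]
        intro e
        induction e using Sym2.ind with
        | _ a b =>
          rw [mem_edgeSet]
          intro hab
          exact hab.ne (Subsingleton.elim a b)
      rw [hempty, Set.ncard_empty]
      omega
    · have hn2 : 2 ≤ n := by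
        have := Fintype.card_pos (α := W)
        omega
      let s : Set W := ({v}ᶜ : Set W)
      have hcards : Fintype.card ↥s = n - 1 := by
        show Fintype.card ↥({v}ᶜ : Set W) = n - 1
        rw [Fintype.card_compl_set]
        simp [hcard]
      haveI hnes : Nonempty ↥s := by
        rw [← Fintype.card_pos_iff, hcards]; omega
      have hacs : (G.induce s).IsAcyclic := by
        intro x c hc
        exact hac _ (hc.map (f := (SimpleGraph.Embedding.induce s).toHom)
          Subtype.val_injective)
      have hIH := IH (n-1) (by omega) ↥s (G.induce s) hnes hcards hacs
      have hsplit : G.edgeSet = {e ∈ G.edgeSet | ∀ x ∈ e, x ∈ s} ∪ G.incidenceSet v := by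
        ext e
        simp only [Set.mem_union, Set.mem_setOf_eq, incidenceSet, s, Set.mem_compl_iff,
          Set.mem_singleton_iff]
        constructor
        · intro he
          by_cases hvmem : v ∈ e
          · exact Or.inr ⟨he, hvmem⟩
          · exact Or.inl ⟨he, fun x hx hxv => hvmem (hxv ▸ hx)⟩
        · rintro (⟨he, -⟩ | ⟨he, -⟩) <;> exact he
      have hdisj : Disjoint {e ∈ G.edgeSet | ∀ x ∈ e, x ∈ s} (G.incidenceSet v) := by
        rw [Set.disjoint_left]
        rintro e ⟨-, hall⟩ ⟨-, hvmem⟩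
        exact (hall v hvmem) rfl
      have hcount : G.edgeSet.ncard
          = {e ∈ G.edgeSet | ∀ x ∈ e, x ∈ s}.ncard + (G.incidenceSet v).ncard := by
        conv_lhs => rw [hsplit]
        exact Set.ncard_union_eq hdisj (Set.toFinite _) (Set.toFinite _)
      have hinc : (G.incidenceSet v).ncard ≤ 1 := by
        have : (G.incidenceSet v).ncard = (G.neighborSet v).ncard := by
          rw [← Nat.card_coe_set_eq, ← Nat.card_coe_set_eq]
          exact Nat.card_congr (G.incidenceSetEquivNeighborSet v)
        omega
      have hind : {e ∈ G.edgeSet | ∀ x ∈ e, x ∈ s}.ncard = (G.induce s).edgeSet.ncard := by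
        rw [← image_induce_edgeSet, Set.ncard_image_of_injective _
          (Sym2.map.injective Subtype.val_injective)]
      omega

lemma acyclic_ncard_bound {W : Type} [Fintype W] [Nonempty W] {G : SimpleGraph W}
    (hG : G.IsAcyclic) : G.edgeSet.ncard + 1 ≤ Fintype.card W :=
  acyclic_aux _ W G ‹_› rfl hG





def edgesIn {V : Type} (G : SimpleGraph V) (A : Set V) : Set (Sym2 V) :=
  {e ∈ G.edgeSet | ∀ v ∈ e, v ∈ A}

lemma cutEdges_compl {V : Type} (G : SimpleGraph V) (A : Set V) :
    cutEdges G Aᶜ = cutEdges G A := by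
  ext e
  constructor
  · rintro ⟨a, b, ha, hb, hab, rfl⟩
    exact ⟨b, a, by simpa using hb, by simpa using ha, hab.symm, Sym2.eq_swap⟩
  · rintro ⟨a, b, ha, hb, hab, rfl⟩
    exact ⟨b, a, by simpa using hb, by simpa using ha, hab.symm, Sym2.eq_swap⟩

lemma handshake {V : Type} [Fintype V] (G : SimpleGraph V) (hcub : IsCubic G) (A : Set V) :
    3 * A.ncard = 2 * (edgesIn G A).ncard + (cutEdges G A).ncard := by
  classical
  let GA : SimpleGraph V := {
    Adj := fun a b => G.Adj a b ∧ a ∈ A ∧ b ∈ A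
    symm := ⟨fun a b ⟨h, ha, hb⟩ => ⟨h.symm, hb, ha⟩⟩
    loopless := ⟨fun a ⟨h, _, _⟩ => G.irrefl h⟩ }
  haveI : DecidableRel GA.Adj := Classical.decRel _
  have hGAnbr : ∀ v : V, GA.neighborFinset v = (G.neighborFinset v).filter (fun w => v ∈ A ∧ w ∈ A) := by
    intro v
    ext w
    simp only [mem_neighborFinset, Finset.mem_filter]
    exact Iff.rfl
  -- outside A the degree is zero
  have hout : ∀ v : V, v ∉ A → GA.degree v = 0 := by
    intro v hv
    rw [← card_neighborFinset_eq_degree, hGAnbr]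
    rw [Finset.card_eq_zero]
    ext w
    simp only [Finset.mem_filter, Finset.notMem_empty, iff_false]
    rintro ⟨-, ha, -⟩
    exact hv ha
  -- inside A : G.degree v = GA.degree v + #neighbors outside
  have hin : ∀ v ∈ A.toFinset, G.degree v
      = GA.degree v + ((G.neighborFinset v).filter (fun w => w ∉ A)).card := by
    intro v hv
    rw [Set.mem_toFinset] at hv
    rw [← card_neighborFinset_eq_degree, ← card_neighborFinset_eq_degree, hGAnbr]
    have : (G.neighborFinset v).filter (fun w => v ∈ A ∧ w ∈ A)
        = (G.neighborFinset v).filter (fun w => w ∈ A) := by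
      apply Finset.filter_congr
      intro w _
      simp [hv]
    rw [this]
    exact (Finset.card_filter_add_card_filter_not (fun w => w ∈ A)).symm
  -- degree sum over A
  have hdeg3 : ∀ v : V, G.degree v = 3 := by
    intro v
    rw [← card_neighborSet_eq_degree, ← Nat.card_eq_fintype_card, Nat.card_coe_set_eq]
    exact hcub v
  have hsum3 : ∑ v ∈ A.toFinset, G.degree v = 3 * A.ncard := by
    rw [Finset.sum_congr rfl (fun v _ => hdeg3 v), Finset.sum_const, smul_eq_mul,
      Set.ncard_eq_toFinset_card' A, mul_comm]
  -- edges count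
  have hedges : (edgesIn G A).ncard = GA.edgeFinset.card := by
    have : edgesIn G A = ↑GA.edgeFinset := by
      rw [coe_edgeFinset]
      ext e
      induction e using Sym2.ind with
      | _ a b =>
        simp only [edgesIn, Set.mem_setOf_eq, mem_edgeSet]
        constructor
        · rintro ⟨h, hall⟩
          exact ⟨h, hall a (Sym2.mem_mk_left a b), hall b (Sym2.mem_mk_right a b)⟩
        · rintro ⟨h, ha, hb⟩
          refine ⟨h, ?_⟩
          intro x hx
          rcases Sym2.mem_iff.mp hx with rfl | rfl
          · exact ha
          · exact hb
    rw [this, Set.ncard_coe_finset]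
  have hGAsum : ∑ v ∈ A.toFinset, GA.degree v = 2 * GA.edgeFinset.card := by
    rw [← sum_degrees_eq_twice_card_edges]
    apply Finset.sum_subset (Finset.subset_univ _)
    intro v _ hv
    rw [Set.mem_toFinset] at hv
    exact hout v hv
  -- cut count
  have hcut : (cutEdges G A).ncard
      = ∑ v ∈ A.toFinset, ((G.neighborFinset v).filter (fun w => w ∉ A)).card := by
    let DF : Finset (V × V) :=
      Finset.univ.filter (fun p : V × V => p.1 ∈ A ∧ p.2 ∉ A ∧ G.Adj p.1 p.2)
    have h1 : cutEdges G A = ↑(DF.image fun p => s(p.1, p.2)) := by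
      ext e
      simp only [Finset.coe_image, Set.mem_image, Finset.mem_coe, Finset.mem_filter,
        Finset.mem_univ, true_and, DF]
      constructor
      · rintro ⟨a, b, ha, hb, hab, rfl⟩
        exact ⟨(a, b), ⟨ha, hb, hab⟩, rfl⟩
      · rintro ⟨⟨a, b⟩, ⟨ha, hb, hab⟩, rfl⟩
        exact ⟨a, b, ha, hb, hab, rfl⟩
    have h2 : (DF.image fun p => s(p.1, p.2)).card = DF.card := by
      apply Finset.card_image_of_injOn
      rintro ⟨a, b⟩ hab ⟨c, d⟩ hcd he
      simp only [Finset.mem_coe, Finset.mem_filter, Finset.mem_univ, true_and, DF] at hab hcd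
      rw [Sym2.eq_iff] at he
      rcases he with ⟨rfl, rfl⟩ | ⟨rfl, rfl⟩
      · rfl
      · exact absurd hab.1 hcd.2.1
    have h3 : DF.card = ∑ v ∈ A.toFinset, ((DF.filter (fun p => p.1 = v)).card) := by
      apply Finset.card_eq_sum_card_fiberwise
      intro p hp
      simp only [Finset.mem_filter, Finset.mem_univ, true_and, DF] at hp
      rw [Finset.mem_coe, Finset.mem_filter] at hp
      rw [Finset.mem_coe, Set.mem_toFinset]
      exact hp.2.1
    have h4 : ∀ v ∈ A.toFinset, (DF.filter (fun p => p.1 = v)).card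
        = ((G.neighborFinset v).filter (fun w => w ∉ A)).card := by
      intro v hv
      rw [Set.mem_toFinset] at hv
      refine Finset.card_bij' (fun p _ => p.2) (fun w _ => (v, w)) ?_ ?_ ?_ ?_
      · rintro ⟨a, b⟩ hp
        simp only [Finset.mem_filter, Finset.mem_univ, true_and, DF] at hp
        obtain ⟨⟨-, hb, hab⟩, rfl⟩ := hp
        simp only [Finset.mem_filter, mem_neighborFinset]
        exact ⟨hab, hb⟩
      · intro w hw
        simp only [Finset.mem_filter, mem_neighborFinset] at hw
        simp only [Finset.mem_filter, Finset.mem_univ, true_and, DF]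
        exact ⟨⟨hv, hw.2, hw.1⟩, trivial⟩
      · rintro ⟨a, b⟩ hp
        simp only [Finset.mem_filter, Finset.mem_univ, true_and, DF] at hp
        rw [Prod.ext_iff]
        exact ⟨hp.2.symm, rfl⟩
      · intro w _
        rfl
    rw [h1, Set.ncard_coe_finset, h2, h3]
    exact Finset.sum_congr rfl h4
  calc 3 * A.ncard = ∑ v ∈ A.toFinset, G.degree v := hsum3.symm
    _ = ∑ v ∈ A.toFinset, (GA.degree v + ((G.neighborFinset v).filter (fun w => w ∉ A)).card) :=
        Finset.sum_congr rfl hin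
    _ = ∑ v ∈ A.toFinset, GA.degree v
        + ∑ v ∈ A.toFinset, ((G.neighborFinset v).filter (fun w => w ∉ A)).card :=
        Finset.sum_add_distrib
    _ = 2 * (edgesIn G A).ncard + (cutEdges G A).ncard := by rw [hGAsum, hedges, hcut]



lemma hasCircuit_quad {V : Type} {G : SimpleGraph V} {s : Set V} {a b c d : V}
    (ha : a ∈ s) (hb : b ∈ s) (hc : c ∈ s) (hd : d ∈ s)
    (hab : a ≠ b) (hac : a ≠ c) (had : a ≠ d) (hbc : b ≠ c) (hbd : b ≠ d) (hcd : c ≠ d)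
    (e1 : G.Adj a b) (e2 : G.Adj b c) (e3 : G.Adj c d) (e4 : G.Adj d a) :
    HasCircuit (G.induce s) := by
  have A1 : (G.induce s).Adj ⟨a, ha⟩ ⟨b, hb⟩ := by simpa using e1
  have A2 : (G.induce s).Adj ⟨b, hb⟩ ⟨c, hc⟩ := by simpa using e2
  have A3 : (G.induce s).Adj ⟨c, hc⟩ ⟨d, hd⟩ := by simpa using e3
  have A4 : (G.induce s).Adj ⟨d, hd⟩ ⟨a, ha⟩ := by simpa using e4
  refine ⟨⟨a, ha⟩, Walk.cons A1 (Walk.cons A2 (Walk.cons A3 (Walk.cons A4 Walk.nil))), ?_⟩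
  rw [Walk.isCycle_def]
  refine ⟨?_, by simp, ?_⟩
  · simp [Sym2.eq_iff, Subtype.ext_iff, hab, hac, had, hbc, hbd, hcd,
      hab.symm, hac.symm, had.symm, hbc.symm, hbd.symm, hcd.symm]
  · simp [Subtype.ext_iff, hab, hac, had, hbc, hbd, hcd, hab.symm, hac.symm, had.symm,
      hbc.symm, hbd.symm, hcd.symm]

lemma hasCircuit_triangle {V : Type} {G : SimpleGraph V} {s : Set V} {a b c : V}
    (ha : a ∈ s) (hb : b ∈ s) (hc : c ∈ s)
    (hab : a ≠ b) (hac : a ≠ c) (hbc : b ≠ c)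
    (e1 : G.Adj a b) (e2 : G.Adj b c) (e3 : G.Adj c a) :
    HasCircuit (G.induce s) := by
  have A1 : (G.induce s).Adj ⟨a, ha⟩ ⟨b, hb⟩ := by simpa using e1
  have A2 : (G.induce s).Adj ⟨b, hb⟩ ⟨c, hc⟩ := by simpa using e2
  have A3 : (G.induce s).Adj ⟨c, hc⟩ ⟨a, ha⟩ := by simpa using e3
  refine ⟨⟨a, ha⟩, Walk.cons A1 (Walk.cons A2 (Walk.cons A3 Walk.nil)), ?_⟩
  rw [Walk.isCycle_def]
  refine ⟨?_, by simp, ?_⟩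
  · simp [Sym2.eq_iff, Subtype.ext_iff, hab, hac, hbc, hab.symm, hac.symm, hbc.symm]
  · simp [Subtype.ext_iff, hab, hac, hbc, hab.symm, hac.symm, hbc.symm]
section More
variable {V : Type} [Fintype V] {G : SimpleGraph V}

lemma mem_edgesIn {A : Set V} {a b : V} (h : G.Adj a b) (ha : a ∈ A) (hb : b ∈ A) :
    s(a, b) ∈ edgesIn G A := by
  refine ⟨h, ?_⟩
  intro x hx
  rcases Sym2.mem_iff.mp hx with rfl | rfl
  · exact ha
  · exact hb

lemma edgesIn_bound (G : SimpleGraph V) (B : Set V) (hne : B.Nonempty)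
    (h : ¬ HasCircuit (G.induce B)) : (edgesIn G B).ncard + 1 ≤ B.ncard := by
  classical
  haveI : Nonempty ↥B := hne.to_subtype
  have hac : (G.induce B).IsAcyclic := by
    intro v c hc
    exact h ⟨v, c, hc⟩
  have hbound := acyclic_ncard_bound hac
  have h1 : (edgesIn G B).ncard = (G.induce B).edgeSet.ncard := by
    rw [show edgesIn G B = {e ∈ G.edgeSet | ∀ v ∈ e, v ∈ B} from rfl, ← image_induce_edgeSet,
      Set.ncard_image_of_injective _ (Sym2.map.injective Subtype.val_injective)]
  have h2 : Fintype.card ↥B = B.ncard := by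
    rw [Set.ncard_eq_toFinset_card' B, Set.toFinset_card]
  omega

lemma compl_hasCircuit (hcub : IsCubic G) (A : Set V)
    (hcut : (cutEdges G A).ncard ≤ 4) (hcard : A.ncard + 6 ≤ Fintype.card V) :
    HasCircuit (G.induce Aᶜ) := by
  by_contra h
  have hcompl : A.ncard + Aᶜ.ncard = Fintype.card V := by
    rw [Set.ncard_add_ncard_compl, Nat.card_eq_fintype_card]
  have hne : Aᶜ.Nonempty := Set.nonempty_of_ncard_ne_zero (by omega)
  have hb := edgesIn_bound G Aᶜ hne h
  have hh := handshake G hcub Aᶜ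
  rw [cutEdges_compl] at hh
  omega

lemma quadOn_ncard {A : Set V} (h : IsQuadrangleGraphOn G A) : A.ncard = 4 := by
  obtain ⟨a, b, c, d, rfl, h1, h2, h3, h4, h5, h6, -⟩ := h
  exact myNcard4 a b c d h1 h2 h3 h4 h5 h6

/-- The union-of-two-quadrangles contradiction. -/
lemma union_contra (hcub : IsCubic G) (hqc : QuadConnected G) (A : Set V)
    (hc12 : 12 ≤ Fintype.card V) (h5 : 5 ≤ A.ncard) (h6 : A.ncard ≤ 6)
    (hE : A.ncard + 1 ≤ (edgesIn G A).ncard) (hcirc : HasCircuit (G.induce A)) : False := by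
  have hh := handshake G hcub A
  have hcut : (cutEdges G A).ncard ≤ 4 := by omega
  have hcompl : A.ncard + Aᶜ.ncard = Fintype.card V := by rw [Set.ncard_add_ncard_compl, Nat.card_eq_fintype_card]
  have hAne : A.Nonempty := Set.nonempty_of_ncard_ne_zero (by omega)
  have hAcne : Aᶜ.Nonempty := Set.nonempty_of_ncard_ne_zero (by omega)
  rcases hqc.2.2.2 A hAne hAcne hcut with (hc | hq) | (hc | hq)
  · exact hc hcirc
  · have := quadOn_ncard hq
    omega
  · exact hc (compl_hasCircuit hcub A hcut (by omega))
  · have := quadOn_ncard hq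
    omega

/-- quadrangle contradiction under cyclic 5-connectivity -/
lemma quad_contra5 (hcub : IsCubic G) (h5c : CyclicallyKConnected G 5) {a b c d : V}
    (hab : a ≠ b) (hac : a ≠ c) (had : a ≠ d) (hbc : b ≠ c) (hbd : b ≠ d) (hcd : c ≠ d)
    (e1 : G.Adj a b) (e2 : G.Adj b c) (e3 : G.Adj c d) (e4 : G.Adj d a) : False := by
  set A : Set V := {a, b, c, d} with hA
  have hA4 : A.ncard = 4 := myNcard4 a b c d hab hac had hbc hbd hcd
  have hEsub : ({s(a,b), s(b,c), s(c,d), s(d,a)} : Set (Sym2 V)) ⊆ edgesIn G A := by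
    intro e he
    rcases he with rfl | rfl | rfl | he
    · exact mem_edgesIn e1 (by simp [hA]) (by simp [hA])
    · exact mem_edgesIn e2 (by simp [hA]) (by simp [hA])
    · exact mem_edgesIn e3 (by simp [hA]) (by simp [hA])
    · rw [Set.mem_singleton_iff] at he; subst he
      exact mem_edgesIn e4 (by simp [hA]) (by simp [hA])
  have hE4 : 4 ≤ (edgesIn G A).ncard := by
    have hle := Set.ncard_le_ncard hEsub (Set.toFinite _)
    have hcardE : ({s(a,b), s(b,c), s(c,d), s(d,a)} : Set (Sym2 V)).ncard = 4 := by
      apply myNcard4 <;>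
        simp [Sym2.eq_iff, hab, hac, had, hbc, hbd, hcd,
          hab.symm, hac.symm, had.symm, hbc.symm, hbd.symm, hcd.symm]
    omega
  have hh := handshake G hcub A
  have hcut : (cutEdges G A).ncard ≤ 4 := by omega
  have h10 : 10 ≤ Fintype.card V := h5c.2.1
  have hcompl : A.ncard + Aᶜ.ncard = Fintype.card V := by rw [Set.ncard_add_ncard_compl, Nat.card_eq_fintype_card]
  have hAne : A.Nonempty := Set.nonempty_of_ncard_ne_zero (by omega)
  have hAcne : Aᶜ.Nonempty := Set.nonempty_of_ncard_ne_zero (by omega)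
  rcases h5c.2.2 A hAne hAcne (by omega) with hc | hc
  · exact hc (hasCircuit_quad (by simp [hA]) (by simp [hA]) (by simp [hA]) (by simp [hA])
      hab hac had hbc hbd hcd e1 e2 e3 e4)
  · exact hc (compl_hasCircuit hcub A hcut (by omega))

/-- triangle contradiction -/
lemma triangle_contra (hcub : IsCubic G) (hqc : QuadConnected G) {a b c : V}
    (hab : a ≠ b) (hac : a ≠ c) (hbc : b ≠ c)
    (e1 : G.Adj a b) (e2 : G.Adj b c) (e3 : G.Adj a c) : False := by
  set A : Set V := {a, b, c} with hA
  have hA3 : A.ncard = 3 := myNcard3 a b c hab hac hbc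
  have hEsub : ({s(a,b), s(b,c), s(c,a)} : Set (Sym2 V)) ⊆ edgesIn G A := by
    intro e he
    rcases he with rfl | rfl | he
    · exact mem_edgesIn e1 (by simp [hA]) (by simp [hA])
    · exact mem_edgesIn e2 (by simp [hA]) (by simp [hA])
    · rw [Set.mem_singleton_iff] at he; subst he
      exact mem_edgesIn e3.symm (by simp [hA]) (by simp [hA])
  have hE3 : 3 ≤ (edgesIn G A).ncard := by
    have hle := Set.ncard_le_ncard hEsub (Set.toFinite _)
    have hcardE : ({s(a,b), s(b,c), s(c,a)} : Set (Sym2 V)).ncard = 3 := by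
      apply myNcard3 <;>
        simp [Sym2.eq_iff, hab, hac, hbc, hab.symm, hac.symm, hbc.symm]
    omega
  have hh := handshake G hcub A
  have hcut : (cutEdges G A).ncard ≤ 3 := by omega
  have h10 : 10 ≤ Fintype.card V := hqc.2.1
  have hcompl : A.ncard + Aᶜ.ncard = Fintype.card V := by rw [Set.ncard_add_ncard_compl, Nat.card_eq_fintype_card]
  have hAne : A.Nonempty := Set.nonempty_of_ncard_ne_zero (by omega)
  have hAcne : Aᶜ.Nonempty := Set.nonempty_of_ncard_ne_zero (by omega)
  rcases hqc.1.2.2 A hAne hAcne (by omega) with hc | hc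
  · exact hc (hasCircuit_triangle (by simp [hA]) (by simp [hA]) (by simp [hA])
      hab hac hbc e1 e2 e3.symm)
  · exact hc (compl_hasCircuit hcub A (by omega) (by omega))

/-- third neighbour of a vertex in a cubic graph -/
lemma nbr_third (hcub : IsCubic G) {v x y : V} (hx : G.Adj v x) (hy : G.Adj v y)
    (hxy : x ≠ y) : ∃ t, t ≠ x ∧ t ≠ y ∧ G.neighborSet v = {x, y, t} := by
  have h3 := hcub v
  rw [Set.ncard_eq_three] at h3
  obtain ⟨a, b, c, hab, hac, hbc, hset⟩ := h3
  have hx' : x ∈ ({a, b, c} : Set V) := hset ▸ hx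
  have hy' : y ∈ ({a, b, c} : Set V) := hset ▸ hy
  rw [hset]
  simp only [Set.mem_insert_iff, Set.mem_singleton_iff] at hx' hy'
  rcases hx' with rfl | rfl | rfl <;> rcases hy' with rfl | rfl | rfl
  · exact absurd rfl hxy
  · exact ⟨c, hac.symm, hbc.symm, rfl⟩
  · exact ⟨b, hab.symm, hbc, by ext w; simp; tauto⟩
  · exact ⟨c, hbc.symm, hac.symm, by ext w; simp; tauto⟩
  · exact absurd rfl hxy
  · exact ⟨a, hab, hac, by ext w; simp; tauto⟩
  · exact ⟨b, hbc, hab.symm, by ext w; simp; tauto⟩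
  · exact ⟨a, hac, hab, by ext w; simp; tauto⟩
  · exact absurd rfl hxy

lemma quad_rotate {C : Set V} (hq : IsQuadSet G C) {u : V} (hu : u ∈ C) :
    ∃ p q r, C = {u, p, q, r} ∧ u ≠ p ∧ u ≠ q ∧ u ≠ r ∧ p ≠ q ∧ p ≠ r ∧ q ≠ r ∧
      G.Adj u p ∧ G.Adj p q ∧ G.Adj q r ∧ G.Adj r u := by
  obtain ⟨a, b, c, d, hCeq, hab, hac, had, hbc, hbd, hcd, e1, e2, e3, e4⟩ := hq
  subst hCeq
  simp only [Set.mem_insert_iff, Set.mem_singleton_iff] at hu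
  rcases hu with rfl | rfl | rfl | rfl
  · exact ⟨b, c, d, rfl, hab, hac, had, hbc, hbd, hcd, e1, e2, e3, e4⟩
  · exact ⟨c, d, a, by ext w; simp; tauto, hbc, hbd, hab.symm, hcd, hac.symm, had.symm,
      e2, e3, e4, e1⟩
  · exact ⟨d, a, b, by ext w; simp; tauto, hcd, hac.symm, hbc.symm, had.symm, hbd.symm, hab,
      e3, e4, e1, e2⟩
  · exact ⟨a, b, c, by ext w; simp; tauto, had.symm, hbd.symm, hcd.symm, hab, hac, hbc,
      e4, e1, e2, e3⟩

lemma quad_struct {C : Set V} (hq : IsQuadSet G C) {u v t : V} (hu : u ∈ C)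
    (hsub : ∀ w, w ∈ C → G.Adj u w → w = v ∨ w = t) :
    ∃ q, C = {u, v, q, t} ∧ u ≠ v ∧ u ≠ q ∧ u ≠ t ∧ v ≠ q ∧ v ≠ t ∧ q ≠ t ∧
      G.Adj u v ∧ G.Adj v q ∧ G.Adj q t ∧ G.Adj t u := by
  obtain ⟨p, q, r, hCeq, h1, h2, h3, h4, h5, h6, e1, e2, e3, e4⟩ := quad_rotate hq hu
  have hpC : p ∈ C := by rw [hCeq]; simp
  have hrC : r ∈ C := by rw [hCeq]; simp
  rcases hsub p hpC e1 with rfl | rfl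
  · rcases hsub r hrC e4.symm with rfl | rfl
    · exact absurd rfl h5
    · exact ⟨q, hCeq, h1, h2, h3, h4, h5, h6, e1, e2, e3, e4⟩
  · rcases hsub r hrC e4.symm with rfl | rfl
    · exact ⟨q, by rw [hCeq]; ext w; simp; tauto, h3, h2, h1, h6.symm, h5.symm, h4.symm,
        e4.symm, e3.symm, e2.symm, e1.symm⟩
    · exact absurd rfl h5

end More

/-- for a path u1u2u3u4u5, the extension G+(u1,u2,u4,u5) is short
iff u1 and u5 are adjacent. -/
theorem shortExtension_iff_adjacent
    {V : Type} [Fintype V] (G : SimpleGraph V) (hcub : IsCubic G)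
    (hqc : QuadConnected G) (u₁ u₂ u₃ u₄ u₅ : V)
    (hpath : ([u₁, u₂, u₃, u₄, u₅] : List V).Pairwise (· ≠ ·))
    (h12 : G.Adj u₁ u₂) (h23 : G.Adj u₂ u₃) (h34 : G.Adj u₃ u₄) (h45 : G.Adj u₄ u₅)
    (hside : CyclicallyKConnected G 5 ∨
      ∃ C : Set V, IsQuadSet G C ∧ u₁ ∈ C ∧ u₂ ∈ C ∧ u₄ ∉ C ∧ u₅ ∉ C) :
    ShortOneExtData G u₁ u₂ u₄ u₅ ↔ G.Adj u₁ u₅ := by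
  classical
  simp only [List.pairwise_cons, List.mem_cons, List.mem_singleton, List.not_mem_nil] at hpath
  obtain ⟨hp1, hp2, hp3, hp4, -⟩ := hpath
  have n12 : u₁ ≠ u₂ := hp1 u₂ (by simp)
  have n13 : u₁ ≠ u₃ := hp1 u₃ (by simp)
  have n14 : u₁ ≠ u₄ := hp1 u₄ (by simp)
  have n15 : u₁ ≠ u₅ := hp1 u₅ (by simp)
  have n23 : u₂ ≠ u₃ := hp2 u₃ (by simp)
  have n24 : u₂ ≠ u₄ := hp2 u₄ (by simp)
  have n25 : u₂ ≠ u₅ := hp2 u₅ (by simp)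
  have n34 : u₃ ≠ u₄ := hp3 u₄ (by simp)
  have n35 : u₃ ≠ u₅ := hp3 u₅ (by simp)
  have n45 : u₄ ≠ u₅ := hp4 u₅ (by simp)
  constructor
  · rintro ⟨-, h14 | h15 | h24 | h25⟩
    · -- Case G.Adj u₁ u₄ : quadrangle u₁u₂u₃u₄
      exfalso
      rcases hside with h5c | ⟨C, hCq, h1C, h2C, h4C, h5C⟩
      · exact quad_contra5 hcub h5c n12 n13 n14 n23 n24 n34 h12 h23 h34 h14.symm
      · obtain ⟨t, ht2, ht4, hN⟩ := nbr_third hcub h12 h14 n24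
        have hsub : ∀ w, w ∈ C → G.Adj u₁ w → w = u₂ ∨ w = t := by
          intro w hwC hw
          have hmem : w ∈ G.neighborSet u₁ := hw
          rw [hN] at hmem
          simp only [Set.mem_insert_iff, Set.mem_singleton_iff] at hmem
          rcases hmem with rfl | rfl | rfl
          · exact Or.inl rfl
          · exact absurd hwC h4C
          · exact Or.inr rfl
        obtain ⟨q, hCeq, d1, d2, d3, d4, d5, d6, f1, f2, f3, f4⟩ := quad_struct hCq h1C hsub
        have hqC : q ∈ C := by rw [hCeq]; simp
        have htC : t ∈ C := by rw [hCeq]; simp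
        have hq4 : q ≠ u₄ := fun h => h4C (h ▸ hqC)
        have ht4' : t ≠ u₄ := fun h => h4C (h ▸ htC)
        have hDq : IsQuadSet G {u₁, u₂, u₃, u₄} :=
          ⟨u₁, u₂, u₃, u₄, rfl, n12, n13, n14, n23, n24, n34, h12, h23, h34, h14.symm⟩
        have hc12 : 12 ≤ Fintype.card V := hqc.2.2.1 ⟨C, {u₁, u₂, u₃, u₄}, hCq, hDq,
          fun h => h4C (by rw [h]; simp)⟩
        by_cases hq3 : q = u₃
        · obtain rfl : u₃ = q := hq3.symm
          have hA5 : ({u₁, u₂, u₃, u₄, t} : Set V).ncard = 5 :=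
            myNcard5 u₁ u₂ u₃ u₄ t n12 n13 n14 d3 n23 n24 d5 n34 d6 (Ne.symm ht4')
          have hEsub : ({s(u₁,u₂), s(u₂,u₃), s(u₃,u₄), s(u₄,u₁), s(u₃,t), s(t,u₁)} : Set (Sym2 V))
              ⊆ edgesIn G {u₁, u₂, u₃, u₄, t} := by
            intro e he
            rcases he with rfl | rfl | rfl | rfl | rfl | he
            · exact mem_edgesIn h12 (by simp) (by simp)
            · exact mem_edgesIn h23 (by simp) (by simp)
            · exact mem_edgesIn h34 (by simp) (by simp)
            · exact mem_edgesIn h14.symm (by simp) (by simp)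
            · exact mem_edgesIn f3 (by simp) (by simp)
            · rw [Set.mem_singleton_iff] at he; subst he
              exact mem_edgesIn f4 (by simp) (by simp)
          have hEcard : ({s(u₁,u₂), s(u₂,u₃), s(u₃,u₄), s(u₄,u₁), s(u₃,t), s(t,u₁)}
              : Set (Sym2 V)).ncard = 6 := by
            apply myNcard6 <;>
              simp [Sym2.eq_iff, n12, n13, n14, n23, n24, n34, d3, d5, d6, ht4',
                n12.symm, n13.symm, n14.symm, n23.symm, n24.symm, n34.symm,
                d3.symm, d5.symm, d6.symm, ht4'.symm]
          have hle := Set.ncard_le_ncard hEsub (Set.toFinite _)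
          refine union_contra hcub hqc {u₁, u₂, u₃, u₄, t} hc12 (by omega) (by omega)
            (by omega) ?_
          exact hasCircuit_quad (by simp) (by simp) (by simp) (by simp)
            n12 n13 n14 n23 n24 n34 h12 h23 h34 h14.symm
        · by_cases ht3 : t = u₃
          · obtain rfl : u₃ = t := ht3.symm
            have hA5 : ({u₁, u₂, u₃, u₄, q} : Set V).ncard = 5 :=
              myNcard5 u₁ u₂ u₃ u₄ q n12 n13 n14 d2 n23 n24 d4 n34 (Ne.symm hq3) (Ne.symm hq4)
            have hEsub : ({s(u₁,u₂), s(u₂,u₃), s(u₃,u₄), s(u₄,u₁), s(u₂,q), s(q,u₃)}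
                : Set (Sym2 V)) ⊆ edgesIn G {u₁, u₂, u₃, u₄, q} := by
              intro e he
              rcases he with rfl | rfl | rfl | rfl | rfl | he
              · exact mem_edgesIn h12 (by simp) (by simp)
              · exact mem_edgesIn h23 (by simp) (by simp)
              · exact mem_edgesIn h34 (by simp) (by simp)
              · exact mem_edgesIn h14.symm (by simp) (by simp)
              · exact mem_edgesIn f2 (by simp) (by simp)
              · rw [Set.mem_singleton_iff] at he; subst he
                exact mem_edgesIn f3 (by simp) (by simp)
            have hEcard : ({s(u₁,u₂), s(u₂,u₃), s(u₃,u₄), s(u₄,u₁), s(u₂,q), s(q,u₃)}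
                : Set (Sym2 V)).ncard = 6 := by
              apply myNcard6 <;>
                simp [Sym2.eq_iff, n12, n13, n14, n23, n24, n34, d2, d4, hq3, hq4,
                  n12.symm, n13.symm, n14.symm, n23.symm, n24.symm, n34.symm,
                  d2.symm, d4.symm, Ne.symm hq3, Ne.symm hq4]
            have hle := Set.ncard_le_ncard hEsub (Set.toFinite _)
            refine union_contra hcub hqc {u₁, u₂, u₃, u₄, q} hc12 (by omega) (by omega)
              (by omega) ?_
            exact hasCircuit_quad (by simp) (by simp) (by simp) (by simp)
              n12 n13 n14 n23 n24 n34 h12 h23 h34 h14.symm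
          · have hA6 : ({u₁, u₂, u₃, u₄, q, t} : Set V).ncard = 6 :=
              myNcard6 u₁ u₂ u₃ u₄ q t n12 n13 n14 d2 d3 n23 n24 d4 d5 n34
                (Ne.symm hq3) (Ne.symm ht3) (Ne.symm hq4) (Ne.symm ht4') d6
            have hEsub : ({s(u₁,u₂), s(u₂,u₃), s(u₃,u₄), s(u₄,u₁), s(u₂,q), s(q,t), s(t,u₁)}
                : Set (Sym2 V)) ⊆ edgesIn G {u₁, u₂, u₃, u₄, q, t} := by
              intro e he
              rcases he with rfl | rfl | rfl | rfl | rfl | rfl | he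
              · exact mem_edgesIn h12 (by simp) (by simp)
              · exact mem_edgesIn h23 (by simp) (by simp)
              · exact mem_edgesIn h34 (by simp) (by simp)
              · exact mem_edgesIn h14.symm (by simp) (by simp)
              · exact mem_edgesIn f2 (by simp) (by simp)
              · exact mem_edgesIn f3 (by simp) (by simp)
              · rw [Set.mem_singleton_iff] at he; subst he
                exact mem_edgesIn f4 (by simp) (by simp)
            have hEcard : ({s(u₁,u₂), s(u₂,u₃), s(u₃,u₄), s(u₄,u₁), s(u₂,q), s(q,t), s(t,u₁)}
                : Set (Sym2 V)).ncard = 7 := by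
              apply myNcard7 <;>
                simp [Sym2.eq_iff, n12, n13, n14, n23, n24, n34, d2, d3, d4, d5, d6,
                  hq3, hq4, ht3, ht4', n12.symm, n13.symm, n14.symm, n23.symm, n24.symm,
                  n34.symm, d2.symm, d3.symm, d4.symm, d5.symm, d6.symm,
                  Ne.symm hq3, Ne.symm hq4, Ne.symm ht3, Ne.symm ht4']
            have hle := Set.ncard_le_ncard hEsub (Set.toFinite _)
            refine union_contra hcub hqc {u₁, u₂, u₃, u₄, q, t} hc12 (by omega) (by omega)
              (by omega) ?_
            exact hasCircuit_quad (by simp) (by simp) (by simp) (by simp)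
              n12 n13 n14 n23 n24 n34 h12 h23 h34 h14.symm
    · exact h15
    · -- Case G.Adj u₂ u₄ : triangle u₂u₃u₄
      exact absurd h24 (fun h24 => triangle_contra hcub hqc n23 n24 n34 h23 h34 h24)
    · -- Case G.Adj u₂ u₅ : quadrangle u₂u₃u₄u₅
      exfalso
      rcases hside with h5c | ⟨C, hCq, h1C, h2C, h4C, h5C⟩
      · exact quad_contra5 hcub h5c n23 n24 n25 n34 n35 n45 h23 h34 h45 h25.symm
      · have hNset : G.neighborSet u₂ = {u₁, u₃, u₅} := by
          refine (Set.eq_of_subset_of_ncard_le ?_ ?_ (Set.toFinite _)).symm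
          · rintro w (rfl | rfl | rfl)
            · exact h12.symm
            · exact h23
            · exact h25
          · rw [hcub u₂, myNcard3 u₁ u₃ u₅ n13 n15 n35]
        have hsub : ∀ w, w ∈ C → G.Adj u₂ w → w = u₁ ∨ w = u₃ := by
          intro w hwC hw
          have hmem : w ∈ G.neighborSet u₂ := hw
          rw [hNset] at hmem
          simp only [Set.mem_insert_iff, Set.mem_singleton_iff] at hmem
          rcases hmem with rfl | rfl | rfl
          · exact Or.inl rfl
          · exact Or.inr rfl
          · exact absurd hwC h5C
        obtain ⟨q, hCeq, d1, d2, d3, d4, d5, d6, f1, f2, f3, f4⟩ := quad_struct hCq h2C hsub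
        have hqC : q ∈ C := by rw [hCeq]; simp
        have hq4 : q ≠ u₄ := fun h => h4C (h ▸ hqC)
        have hq5 : q ≠ u₅ := fun h => h5C (h ▸ hqC)
        have hDq : IsQuadSet G {u₂, u₃, u₄, u₅} :=
          ⟨u₂, u₃, u₄, u₅, rfl, n23, n24, n25, n34, n35, n45, h23, h34, h45, h25.symm⟩
        have hc12 : 12 ≤ Fintype.card V := hqc.2.2.1 ⟨C, {u₂, u₃, u₄, u₅}, hCq, hDq,
          fun h => h4C (by rw [h]; simp)⟩
        have hA6 : ({u₁, u₂, u₃, u₄, u₅, q} : Set V).ncard = 6 :=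
          myNcard6 u₁ u₂ u₃ u₄ u₅ q n12 n13 n14 n15 d4 n23 n24 n25 d2 n34 n35
            (Ne.symm d6) n45 (Ne.symm hq4) (Ne.symm hq5)
        have hEsub : ({s(u₂,u₃), s(u₃,u₄), s(u₄,u₅), s(u₅,u₂), s(u₁,u₂), s(u₁,q), s(q,u₃)}
            : Set (Sym2 V)) ⊆ edgesIn G {u₁, u₂, u₃, u₄, u₅, q} := by
          intro e he
          rcases he with rfl | rfl | rfl | rfl | rfl | rfl | he
          · exact mem_edgesIn h23 (by simp) (by simp)
          · exact mem_edgesIn h34 (by simp) (by simp)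
          · exact mem_edgesIn h45 (by simp) (by simp)
          · exact mem_edgesIn h25.symm (by simp) (by simp)
          · exact mem_edgesIn h12 (by simp) (by simp)
          · exact mem_edgesIn f2 (by simp) (by simp)
          · rw [Set.mem_singleton_iff] at he; subst he
            exact mem_edgesIn f3 (by simp) (by simp)
        have hEcard : ({s(u₂,u₃), s(u₃,u₄), s(u₄,u₅), s(u₅,u₂), s(u₁,u₂), s(u₁,q), s(q,u₃)}
            : Set (Sym2 V)).ncard = 7 := by
          apply myNcard7 <;>
            simp [Sym2.eq_iff, n12, n13, n14, n15, n23, n24, n25, n34, n35, n45,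
              d2, d4, d6, hq4, hq5, n12.symm, n13.symm, n14.symm, n15.symm, n23.symm,
              n24.symm, n25.symm, n34.symm, n35.symm, n45.symm, d2.symm, d4.symm, d6.symm,
              hq4.symm, hq5.symm]
        have hle := Set.ncard_le_ncard hEsub (Set.toFinite _)
        refine union_contra hcub hqc {u₁, u₂, u₃, u₄, u₅, q} hc12 (by omega) (by omega)
          (by omega) ?_
        exact hasCircuit_quad (by simp) (by simp) (by simp) (by simp)
          n23 n24 n25 n34 n35 n45 h23 h34 h45 h25.symm
  · intro h15
    exact ⟨⟨h12, h45, n14, n15, n24, n25⟩, Or.inr (Or.inl h15)⟩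
end
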